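/- arXiv:1805.00335 — 5 statements merged into one kernel-verified Lean document; each statement's English description precedes it below -/
import Mathlib

section
/- Let μ be a finite positive Borel measure on [0,∞), let z_1,…,z_M be distinct points of the open upper half-plane ℂ⁺ = {z ∈ ℂ : Im z > 0}, and let u_1,…,u_M, v_1,…,v_M ∈ ℂ satisfy (∫_{[0,∞)} (t − z_i)⁻¹ dμ(t))·u_i = v_i for each i. Then the M×M matrix S₁ with entries (S₁)_{ij} = (conj(u_i)·v_j − conj(v_i)·u_j)/(z_j − conj(z_i)) is Hermitian positive semidefinite. -/
open MeasureTheory Matrix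
open scoped ComplexOrder

lemma cont_inv (z : ℂ) (hz : z.im ≠ 0) : Continuous fun t : ℝ => ((t:ℂ) - z)⁻¹ := by
  apply Continuous.inv₀ (by continuity)
  intro t h
  exact hz (by simpa using (congrArg Complex.im h).symm)

lemma integrable_inv (μ : Measure ℝ) [IsFiniteMeasure μ] (z : ℂ) (hz : z.im ≠ 0) :
    Integrable (fun t : ℝ => ((t:ℂ) - z)⁻¹) μ := by
  refine Integrable.mono' (integrable_const (|z.im|⁻¹))
    ((cont_inv z hz).aestronglyMeasurable) ?_
  filter_upwards with t
  rw [norm_inv]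
  apply inv_anti₀ (abs_pos.mpr hz)
  calc |z.im| = |((t:ℂ) - z).im| := by simp
    _ ≤ ‖(t:ℂ) - z‖ := Complex.abs_im_le_norm _

lemma integrable_inv_mul (μ : Measure ℝ) [IsFiniteMeasure μ] (a b : ℂ)
    (ha : a.im ≠ 0) (hb : b.im ≠ 0) :
    Integrable (fun t : ℝ => ((t:ℂ) - a)⁻¹ * ((t:ℂ) - b)⁻¹) μ := by
  refine (integrable_inv μ b hb).bdd_mul (c := |a.im|⁻¹) ((cont_inv a ha).aestronglyMeasurable) (Filter.Eventually.of_forall ?_)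
  intro t
  rw [norm_inv]
  apply inv_anti₀ (abs_pos.mpr ha)
  calc |a.im| = |((t:ℂ) - a).im| := by simp
    _ ≤ ‖(t:ℂ) - a‖ := Complex.abs_im_le_norm _

lemma entry_eq (μ : Measure ℝ) [IsFiniteMeasure μ] (a b : ℂ)
    (ha : 0 < a.im) (hb : 0 < b.im) (ui uj vi vj : ℂ)
    (hi : (∫ t : ℝ, ((t : ℂ) - a)⁻¹ ∂μ) * ui = vi)
    (hj : (∫ t : ℝ, ((t : ℂ) - b)⁻¹ ∂μ) * uj = vj) :
    ((starRingEnd ℂ) ui * vj - (starRingEnd ℂ) vi * uj) / (b - (starRingEnd ℂ) a)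
      = ∫ t : ℝ, (starRingEnd ℂ) (ui * ((t:ℂ) - a)⁻¹) * (uj * ((t:ℂ) - b)⁻¹) ∂μ := by
  have ha' : a.im ≠ 0 := ne_of_gt ha
  have hb' : b.im ≠ 0 := ne_of_gt hb
  have hca : (starRingEnd ℂ) a ≠ b := by
    intro h
    have := congrArg Complex.im h
    simp [Complex.conj_im] at this
    linarith
  have hd : b - (starRingEnd ℂ) a ≠ 0 := sub_ne_zero.mpr (Ne.symm hca)
  have hconjF : (starRingEnd ℂ) (∫ t : ℝ, ((t : ℂ) - a)⁻¹ ∂μ)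
      = ∫ t : ℝ, ((t:ℂ) - (starRingEnd ℂ) a)⁻¹ ∂μ := by
    rw [← integral_conj]
    congr 1; funext t
    simp [map_inv₀]
  have hdiff : (∫ t : ℝ, ((t : ℂ) - b)⁻¹ ∂μ) - (∫ t : ℝ, ((t:ℂ) - (starRingEnd ℂ) a)⁻¹ ∂μ)
      = (b - (starRingEnd ℂ) a) * ∫ t : ℝ, ((t:ℂ) - (starRingEnd ℂ) a)⁻¹ * ((t:ℂ) - b)⁻¹ ∂μ := by
    rw [← integral_sub (integrable_inv μ b hb') (integrable_inv μ _ (by simp [Complex.conj_im, ha']))]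
    rw [← integral_const_mul]
    congr 1; funext t
    have h1 : (t:ℂ) - b ≠ 0 := by
      intro h; exact hb' (by simpa using (congrArg Complex.im h).symm)
    have h2 : (t:ℂ) - (starRingEnd ℂ) a ≠ 0 := by
      intro h
      have := (congrArg Complex.im h).symm
      simp [Complex.conj_im] at this
      exact ha' this.symm
    field_simp
    ring_nf
  rw [← hi, ← hj]
  rw [div_eq_iff hd]
  calc (starRingEnd ℂ) ui * ((∫ t : ℝ, ((t : ℂ) - b)⁻¹ ∂μ) * uj)
        - (starRingEnd ℂ) ((∫ t : ℝ, ((t : ℂ) - a)⁻¹ ∂μ) * ui) * uj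
      = (starRingEnd ℂ) ui * uj *
          ((∫ t : ℝ, ((t : ℂ) - b)⁻¹ ∂μ) - ∫ t : ℝ, ((t:ℂ) - (starRingEnd ℂ) a)⁻¹ ∂μ) := by
        rw [_root_.map_mul, hconjF]; ring
    _ = (starRingEnd ℂ) ui * uj * ((b - (starRingEnd ℂ) a)
          * ∫ t : ℝ, ((t:ℂ) - (starRingEnd ℂ) a)⁻¹ * ((t:ℂ) - b)⁻¹ ∂μ) := by rw [hdiff]
    _ = (∫ t : ℝ, (starRingEnd ℂ) (ui * ((t:ℂ) - a)⁻¹) * (uj * ((t:ℂ) - b)⁻¹) ∂μ)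
          * (b - (starRingEnd ℂ) a) := by
        rw [← integral_const_mul, ← integral_const_mul, ← integral_mul_const]
        congr 1; funext t
        simp only [_root_.map_mul, map_inv₀, map_sub, Complex.conj_ofReal]
        ring

lemma gram_psd (M : ℕ) (μ : Measure ℝ) [IsFiniteMeasure μ]
    (z : Fin M → ℂ) (u : Fin M → ℂ)
    (hint : ∀ i j : Fin M, Integrable (fun t : ℝ =>
      (starRingEnd ℂ) (u i * ((t:ℂ) - z i)⁻¹) * (u j * ((t:ℂ) - z j)⁻¹)) μ) :
    (Matrix.of fun i j : Fin M =>
      ∫ t : ℝ, (starRingEnd ℂ) (u i * ((t:ℂ) - z i)⁻¹) * (u j * ((t:ℂ) - z j)⁻¹) ∂μ).PosSemidef := by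
  set g : Fin M → ℝ → ℂ := fun i t => u i * ((t:ℂ) - z i)⁻¹ with hg
  rw [posSemidef_iff_dotProduct_mulVec]
  constructor
  · ext i j
    simp only [conjTranspose_apply, of_apply, RCLike.star_def]
    rw [← integral_conj]
    congr 1; funext t
    simp only [_root_.map_mul, RingHomCompTriple.comp_apply, RingHom.id_apply]
    ring
  · intro x
    have hint2 : ∀ i j : Fin M, Integrable (fun t : ℝ =>
        (starRingEnd ℂ) (x i * g i t) * (x j * g j t)) μ :=
      fun i j => ((hint i j).const_mul ((starRingEnd ℂ) (x i) * x j)).congr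
        (Filter.Eventually.of_forall fun t => by simp only [hg, _root_.map_mul]; ring)
    have hs : star x ⬝ᵥ (Matrix.of fun i j : Fin M =>
        ∫ t : ℝ, (starRingEnd ℂ) (g i t) * g j t ∂μ) *ᵥ x
        = ∫ t : ℝ, ((Complex.normSq (∑ j, x j * g j t) : ℝ) : ℂ) ∂μ := by
      simp only [mulVec, dotProduct, Pi.star_apply, of_apply, RCLike.star_def, Finset.mul_sum]
      have step : ∀ i j : Fin M,
          (starRingEnd ℂ) (x i) * ((∫ t : ℝ, (starRingEnd ℂ) (g i t) * g j t ∂μ) * x j)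
          = ∫ t : ℝ, (starRingEnd ℂ) (x i * g i t) * (x j * g j t) ∂μ := by
        intro i j
        rw [show (starRingEnd ℂ) (x i) * ((∫ t : ℝ, (starRingEnd ℂ) (g i t) * g j t ∂μ) * x j)
            = ((starRingEnd ℂ) (x i) * x j) * ∫ t : ℝ, (starRingEnd ℂ) (g i t) * g j t ∂μ
            from by ring, ← integral_const_mul]
        congr 1; funext t
        simp only [_root_.map_mul]; ring
      simp only [step]
      have inner : ∀ i : Fin M, ∑ j, ∫ t : ℝ, (starRingEnd ℂ) (x i * g i t) * (x j * g j t) ∂μ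
          = ∫ t : ℝ, ∑ j, (starRingEnd ℂ) (x i * g i t) * (x j * g j t) ∂μ :=
        fun i => (integral_finset_sum _ (fun j _ => hint2 i j)).symm
      simp only [inner]
      rw [← integral_finset_sum _ (fun i _ => integrable_finset_sum _ (fun j _ => hint2 i j))]
      congr 1; funext t
      rw [← Finset.sum_mul_sum, ← map_sum, Complex.normSq_eq_conj_mul_self]
    rw [hs]
    have : ∫ t : ℝ, ((Complex.normSq (∑ j, x j * g j t) : ℝ) : ℂ) ∂μ
        = ((∫ t : ℝ, Complex.normSq (∑ j, x j * g j t) ∂μ : ℝ) : ℂ) := integral_ofReal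
    rw [this]
    exact Complex.zero_le_real.mpr (integral_nonneg fun t => Complex.normSq_nonneg _)

/-- For a finite positive Borel measure μ on [0,∞), distinct points
z₁,…,z_M in the open upper half-plane, and u_i, v_i ∈ ℂ with F(z_i)·u_i = v_i where
F is the Cauchy–Stieltjes transform of μ, the matrix S₁ with entries
(conj(u_i)·v_j − conj(v_i)·u_j)/(z_j − conj(z_i)) is Hermitian positive semidefinite. -/
theorem stmt0 (M : ℕ) (μ : Measure ℝ) [IsFiniteMeasure μ]
    (hμ : μ (Set.Iio 0) = 0)
    (z : Fin M → ℂ) (hz : Function.Injective z) (him : ∀ i, 0 < (z i).im)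
    (u v : Fin M → ℂ)
    (huv : ∀ i, (∫ t : ℝ, ((t : ℂ) - z i)⁻¹ ∂μ) * u i = v i) :
    (Matrix.of fun i j : Fin M =>
      ((starRingEnd ℂ) (u i) * v j - (starRingEnd ℂ) (v i) * u j) /
        (z j - (starRingEnd ℂ) (z i))).PosSemidef := by
  have hrepr : (Matrix.of fun i j : Fin M =>
      ((starRingEnd ℂ) (u i) * v j - (starRingEnd ℂ) (v i) * u j) /
        (z j - (starRingEnd ℂ) (z i)))
      = Matrix.of fun i j : Fin M =>
        ∫ t : ℝ, (starRingEnd ℂ) (u i * ((t:ℂ) - z i)⁻¹) * (u j * ((t:ℂ) - z j)⁻¹) ∂μ := by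
    ext i j
    simp only [of_apply]
    exact entry_eq μ (z i) (z j) (him i) (him j) (u i) (u j) (v i) (v j) (huv i) (huv j)
  rw [hrepr]
  apply gram_psd
  intro i j
  have h1 : ((starRingEnd ℂ) (z i)).im ≠ 0 := by
    simpa [Complex.conj_im] using (him i).ne'
  have := (integrable_inv_mul μ ((starRingEnd ℂ) (z i)) (z j) h1 (him j).ne').const_mul
    ((starRingEnd ℂ) (u i) * u j)
  refine this.congr (Filter.Eventually.of_forall fun t => ?_)
  simp only [_root_.map_mul, map_inv₀, map_sub, Complex.conj_ofReal]
  ring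
end

section
/- Let μ be a finite positive Borel measure on [0,∞), let z_1,…,z_M be distinct points of the open upper half-plane ℂ⁺ = {z ∈ ℂ : Im z > 0}, and let u_1,…,u_M, v_1,…,v_M ∈ ℂ satisfy (∫_{[0,∞)} (t − z_i)⁻¹ dμ(t))·u_i = v_i for each i. Then the M×M matrix S₂ with entries (S₂)_{ij} = (z_j·conj(u_i)·v_j − conj(z_i)·conj(v_i)·u_j)/(z_j − conj(z_i)) is Hermitian positive semidefinite. -/
open MeasureTheory Matrix
open scoped ComplexOrder

lemma aux_sub_ne (t : ℝ) (z : ℂ) (hz : z.im ≠ 0) : (t : ℂ) - z ≠ 0 := by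
  intro h
  apply hz
  have := congrArg Complex.im h
  simpa using this.symm

lemma aux_integrable_inv (μ : Measure ℝ) [IsFiniteMeasure μ] (z : ℂ) (hz : z.im ≠ 0) :
    Integrable (fun t : ℝ => ((t : ℂ) - z)⁻¹) μ := by
  have hcont : Continuous fun t : ℝ => ((t : ℂ) - z)⁻¹ := by
    apply Continuous.inv₀
    · exact Complex.continuous_ofReal.sub continuous_const
    · intro t; exact aux_sub_ne t z hz
  refine (integrable_const (|z.im|⁻¹)).mono' hcont.aestronglyMeasurable ?_
  filter_upwards with t
  rw [norm_inv]
  apply inv_anti₀ (abs_pos.mpr hz)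
  calc |z.im| = |((t : ℂ) - z).im| := by simp
    _ ≤ ‖(t : ℂ) - z‖ := Complex.abs_im_le_norm _

lemma aux_pf (a b T e : ℂ) (hta : T - a ≠ 0) (htb : T - b ≠ 0) (hab : a - b ≠ 0) :
    e * T * ((T - a)⁻¹ * (T - b)⁻¹)
      = e * (a / (a - b)) * (T - a)⁻¹ + e * (b / (b - a)) * (T - b)⁻¹ := by
  have hba : b - a ≠ 0 := sub_ne_zero.mpr (Ne.symm (sub_ne_zero.mp hab))
  field_simp
  ring

/-- Under the same hypotheses as Statement 0, the matrix S₂ with entries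
(z_j·conj(u_i)·v_j − conj(z_i)·conj(v_i)·u_j)/(z_j − conj(z_i)) is Hermitian positive
semidefinite. -/
theorem stmt1 (M : ℕ) (μ : Measure ℝ) [IsFiniteMeasure μ]
    (hμ : μ (Set.Iio 0) = 0)
    (z : Fin M → ℂ) (hz : Function.Injective z) (him : ∀ i, 0 < (z i).im)
    (u v : Fin M → ℂ)
    (huv : ∀ i, (∫ t : ℝ, ((t : ℂ) - z i)⁻¹ ∂μ) * u i = v i) :
    (Matrix.of fun i j : Fin M =>
      (z j * (starRingEnd ℂ) (u i) * v j - (starRingEnd ℂ) (z i) * (starRingEnd ℂ) (v i) * u j) /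
        (z j - (starRingEnd ℂ) (z i))).PosSemidef := by
  set c := starRingEnd ℂ
  set h : Fin M → ℝ → ℂ := fun j t => (Real.sqrt t : ℂ) * u j / ((t : ℂ) - z j) with hh
  have hae : ∀ᵐ t ∂μ, 0 ≤ t := by
    have := measure_eq_zero_iff_ae_notMem.mp hμ
    filter_upwards [this] with t ht
    simpa [Set.mem_Iio, not_lt] using ht
  have hne : ∀ i, (z i).im ≠ 0 := fun i => ne_of_gt (him i)
  have hcne : ∀ i, (c (z i)).im ≠ 0 := fun i => by
    simp only [c, Complex.conj_im]
    exact neg_ne_zero.mpr (hne i)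
  have hab : ∀ i j, z j - c (z i) ≠ 0 := fun i j => by
    intro hcontra
    have : (z j - c (z i)).im = 0 := by rw [hcontra]; simp
    rw [Complex.sub_im] at this
    simp only [c, Complex.conj_im] at this
    have := him i; have := him j; linarith
  have hab' : ∀ i j, c (z i) - z j ≠ 0 := fun i j =>
    sub_ne_zero.mpr (Ne.symm (sub_ne_zero.mp (hab i j)))
  have heq : ∀ i j, (fun t => c (h i t) * h j t) =ᵐ[μ]
      fun t => (c (u i) * u j * (c (z i) / (c (z i) - z j))) * ((t : ℂ) - c (z i))⁻¹
        + (c (u i) * u j * (z j / (z j - c (z i)))) * ((t : ℂ) - z j)⁻¹ := by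
    intro i j
    filter_upwards [hae] with t ht
    have hta : (t : ℂ) - c (z i) ≠ 0 := aux_sub_ne t _ (hcne i)
    have htb : (t : ℂ) - z j ≠ 0 := aux_sub_ne t _ (hne j)
    have hsq : ((Real.sqrt t : ℂ)) * ((Real.sqrt t : ℂ)) = (t : ℂ) := by
      rw [← Complex.ofReal_mul, Real.mul_self_sqrt ht]
    calc c (h i t) * h j t
        = (c (u i) * u j) * ((Real.sqrt t : ℂ) * (Real.sqrt t : ℂ))
            * (((t : ℂ) - c (z i))⁻¹ * ((t : ℂ) - z j)⁻¹) := by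
          simp only [hh, c, div_eq_mul_inv, _root_.map_mul, map_inv₀, map_sub,
            Complex.conj_ofReal]
          ring
      _ = (c (u i) * u j) * (t : ℂ) * (((t : ℂ) - c (z i))⁻¹ * ((t : ℂ) - z j)⁻¹) := by
          rw [hsq]
      _ = _ := aux_pf _ _ _ _ hta htb (hab' i j)
  have hmeasint : ∀ i j, Integrable (fun t => c (h i t) * h j t) μ := by
    intro i j
    refine Integrable.congr ?_ (heq i j).symm
    exact ((aux_integrable_inv μ _ (hcne i)).const_mul _).add
      ((aux_integrable_inv μ _ (hne j)).const_mul _)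
  have key : ∀ i j, (z j * c (u i) * v j - c (z i) * c (v i) * u j) / (z j - c (z i))
      = ∫ t, c (h i t) * h j t ∂μ := by
    intro i j
    rw [integral_congr_ae (heq i j), integral_add ((aux_integrable_inv μ _ (hcne i)).const_mul _)
      ((aux_integrable_inv μ _ (hne j)).const_mul _), integral_const_mul, integral_const_mul]
    have hconjF : (∫ t : ℝ, ((t : ℂ) - c (z i))⁻¹ ∂μ) = c (∫ t : ℝ, ((t : ℂ) - z i)⁻¹ ∂μ) := by
      rw [← integral_conj]
      congr 1
      funext t
      simp [c, map_inv₀, Complex.conj_ofReal]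
    rw [hconjF, ← huv j]
    have hvi : c (v i) = c (∫ t : ℝ, ((t : ℂ) - z i)⁻¹ ∂μ) * c (u i) := by
      rw [← _root_.map_mul]; exact congrArg c (huv i).symm
    rw [hvi]
    set Fi := ∫ t : ℝ, ((t : ℂ) - z i)⁻¹ ∂μ with hFi
    set Fj := ∫ t : ℝ, ((t : ℂ) - z j)⁻¹ ∂μ with hFj
    have h1 := hab i j
    have h2 := hab' i j
    field_simp
    ring
  rw [posSemidef_iff_dotProduct_mulVec]
  constructor
  · ext i j
    simp only [conjTranspose_apply, Matrix.of_apply, star, RingHom.coe_coe]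
    show c _ = _
    rw [key j i, key i j, ← integral_conj]
    congr 1
    funext t
    simp only [_root_.map_mul, Complex.conj_conj, c]
    ring
  · intro x
    have expand : star x ⬝ᵥ (Matrix.of fun i j : Fin M =>
        (z j * c (u i) * v j - c (z i) * c (v i) * u j) / (z j - c (z i))).mulVec x
        = ∑ i, ∑ j, c (x i) * (((z j * c (u i) * v j - c (z i) * c (v i) * u j) /
            (z j - c (z i))) * x j) := by
      simp [dotProduct, mulVec, Finset.mul_sum, c, mul_comm]
    rw [expand]
    have hint2 : ∀ i j : Fin M, Integrable (fun t => c (x i * h i t) * (x j * h j t)) μ := by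
      intro i j
      refine ((hmeasint i j).const_mul (c (x i) * x j)).congr (ae_of_all _ fun t => ?_)
      simp only [_root_.map_mul, c]
      ring
    have step : ∀ i j : Fin M, c (x i) * (((z j * c (u i) * v j - c (z i) * c (v i) * u j) /
        (z j - c (z i))) * x j) = ∫ t, c (x i * h i t) * (x j * h j t) ∂μ := by
      intro i j
      rw [key i j]
      calc c (x i) * ((∫ t, c (h i t) * h j t ∂μ) * x j)
          = (c (x i) * x j) * ∫ t, c (h i t) * h j t ∂μ := by ring
        _ = ∫ t, (c (x i) * x j) * (c (h i t) * h j t) ∂μ := (integral_const_mul _ _).symm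
        _ = ∫ t, c (x i * h i t) * (x j * h j t) ∂μ := by
            congr 1; funext t; simp only [_root_.map_mul, c]; ring
    simp_rw [step]
    have swap : ∑ i, ∑ j, ∫ t, c (x i * h i t) * (x j * h j t) ∂μ
        = ∫ t, ((Complex.normSq (∑ j, x j * h j t) : ℝ) : ℂ) ∂μ := by
      calc ∑ i, ∑ j, ∫ t, c (x i * h i t) * (x j * h j t) ∂μ
          = ∑ i, ∫ t, ∑ j, c (x i * h i t) * (x j * h j t) ∂μ := by
            refine Finset.sum_congr rfl fun i _ => ?_
            exact (integral_finset_sum _ fun j _ => hint2 i j).symm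
        _ = ∫ t, ∑ i, ∑ j, c (x i * h i t) * (x j * h j t) ∂μ :=
            (integral_finset_sum _ fun i _ => integrable_finset_sum _
              fun j _ => hint2 i j).symm
        _ = ∫ t, ((Complex.normSq (∑ j, x j * h j t) : ℝ) : ℂ) ∂μ := by
            congr 1; funext t
            rw [Complex.normSq_eq_conj_mul_self, map_sum, Finset.sum_mul_sum]
    have hofr : ∫ t, ((Complex.normSq (∑ j, x j * h j t) : ℝ) : ℂ) ∂μ
        = ((∫ t, Complex.normSq (∑ j, x j * h j t) ∂μ : ℝ) : ℂ) := integral_ofReal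
    rw [swap, hofr]
    exact Complex.zero_le_real.mpr (integral_nonneg fun t => Complex.normSq_nonneg _)
end

section
/- Let d_1,…,d_N be nonnegative real numbers, let A_1,…,A_N be Hermitian positive semidefinite p×p complex matrices, and define F(z) = Σ_{k=1}^N (d_k − z)⁻¹ A_k for z ∉ [0,∞). Let z_1,…,z_M be distinct points of the open upper half-plane, and let u_1,…,u_M, v_1,…,v_M be p×q complex matrices with F(z_i)·u_i = v_i for each i. Then the qM×qM block matrix S₁ whose (i,j) block of size q×q is (u_i* v_j − v_i* u_j)/(z_j − conj(z_i)) is Hermitian positive semidefinite. -/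
open Matrix
open scoped ComplexOrder

private lemma stmt3_scalar (dk : ℝ) (zi zj : ℂ) (hi : 0 < zi.im) (hj : 0 < zj.im) :
    (((dk : ℂ) - zj)⁻¹ - ((dk : ℂ) - (starRingEnd ℂ) zi)⁻¹) / (zj - (starRingEnd ℂ) zi) =
      ((dk : ℂ) - (starRingEnd ℂ) zi)⁻¹ * ((dk : ℂ) - zj)⁻¹ := by
  have h1 : (dk : ℂ) - zj ≠ 0 := by
    intro h
    have := congrArg Complex.im h
    simp at this
    linarith
  have h2 : (dk : ℂ) - (starRingEnd ℂ) zi ≠ 0 := by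
    intro h
    have := congrArg Complex.im h
    simp at this
    linarith
  have h3 : zj - (starRingEnd ℂ) zi ≠ 0 := by
    intro h
    have := congrArg Complex.im h
    simp at this
    linarith
  field_simp
  ring

private lemma stmt3_sum_psd {n : Type*} [Fintype n] [DecidableEq n] {N : ℕ}
    (f : Fin N → Matrix n n ℂ) (hf : ∀ k, (f k).PosSemidef) :
    (∑ k, f k).PosSemidef := by
  classical
  induction (Finset.univ : Finset (Fin N)) using Finset.induction_on with
  | empty => simpa using Matrix.PosSemidef.zero
  | insert _ _ h ih => rw [Finset.sum_insert h]; exact (hf _).add ih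

/-- matrix-valued version of Statement 0, with F(z) = Σ (d_k − z)⁻¹ A_k
an atomic matrix Stieltjes function; the qM×qM block matrix S₁ is positive semidefinite. -/
theorem stmt3 (N p q M : ℕ) (d : Fin N → ℝ) (hd : ∀ k, 0 ≤ d k)
    (A : Fin N → Matrix (Fin p) (Fin p) ℂ) (hA : ∀ k, (A k).PosSemidef)
    (z : Fin M → ℂ) (hz : Function.Injective z) (him : ∀ i, 0 < (z i).im)
    (u v : Fin M → Matrix (Fin p) (Fin q) ℂ)
    (huv : ∀ i, (∑ k, ((d k : ℂ) - z i)⁻¹ • A k) * u i = v i) :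
    (Matrix.of fun ia jb : Fin M × Fin q =>
      (((u ia.1)ᴴ * v jb.1 - (v ia.1)ᴴ * u jb.1) ia.2 jb.2) /
        (z jb.1 - (starRingEnd ℂ) (z ia.1))).PosSemidef := by
  set E : Fin N → Matrix (Fin p) (Fin M × Fin q) ℂ := fun k =>
    Matrix.of fun r jb => ((d k : ℂ) - z jb.1)⁻¹ * u jb.1 r jb.2 with hE
  have key : (Matrix.of fun ia jb : Fin M × Fin q =>
      (((u ia.1)ᴴ * v jb.1 - (v ia.1)ᴴ * u jb.1) ia.2 jb.2) /
        (z jb.1 - (starRingEnd ℂ) (z ia.1))) = ∑ k, (E k)ᴴ * A k * E k := by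
    ext ⟨i, a⟩ ⟨j, b⟩
    -- rewrite blocks
    have hv1 : (u i)ᴴ * v j = ∑ k, ((d k : ℂ) - z j)⁻¹ • ((u i)ᴴ * A k * u j) := by
      rw [← huv j]
      simp [Matrix.sum_mul, Matrix.mul_sum, Matrix.smul_mul, Matrix.mul_smul, Matrix.mul_assoc]
    have hv2 : (v i)ᴴ * u j =
        ∑ k, ((d k : ℂ) - (starRingEnd ℂ) (z i))⁻¹ • ((u i)ᴴ * A k * u j) := by
      rw [← huv i]
      have : (∑ k, ((d k : ℂ) - z i)⁻¹ • A k)ᴴ =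
          ∑ k, ((d k : ℂ) - (starRingEnd ℂ) (z i))⁻¹ • A k := by
        simp [Matrix.conjTranspose_sum, Matrix.conjTranspose_smul, (hA _).isHermitian.eq,
          Complex.star_def, map_inv₀, map_sub, Complex.conj_ofReal]
      rw [Matrix.conjTranspose_mul, this]
      simp [Matrix.sum_mul, Matrix.mul_sum, Matrix.smul_mul, Matrix.mul_smul, Matrix.mul_assoc]
    have hrhs : ∀ k : Fin N, ((E k)ᴴ * A k * E k) (i, a) (j, b) =
        ((d k : ℂ) - (starRingEnd ℂ) (z i))⁻¹ * ((d k : ℂ) - z j)⁻¹ *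
          ((u i)ᴴ * A k * u j) a b := by
      intro k
      simp only [hE, Matrix.mul_apply, Matrix.conjTranspose_apply, Matrix.of_apply]
      simp only [Finset.sum_mul, Finset.mul_sum]
      refine Finset.sum_congr rfl fun r _ => ?_
      refine Finset.sum_congr rfl fun s _ => ?_
      simp only [star_mul', Complex.star_def, map_inv₀, map_sub, Complex.conj_ofReal]
      ring
    simp only [Matrix.of_apply, Matrix.sum_apply, hrhs, Matrix.sub_apply, hv1, hv2,
      Matrix.sum_apply, Matrix.smul_apply, smul_eq_mul]
    rw [← Finset.sum_sub_distrib, Finset.sum_div, Finset.sum_congr rfl]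
    intro k _
    have hs := stmt3_scalar (d k) (z i) (z j) (him i) (him j)
    linear_combination (((u i)ᴴ * A k * u j) a b) * hs
  rw [key]
  exact stmt3_sum_psd _ fun k => (hA k).conjTranspose_mul_mul_same (E k)
end

section
/- Let d_1,…,d_N be nonnegative real numbers, let A_1,…,A_N be Hermitian positive semidefinite p×p complex matrices, and define F(z) = Σ_{k=1}^N (d_k − z)⁻¹ A_k for z ∉ [0,∞). Let z_1,…,z_M be distinct points of the open upper half-plane, and let u_1,…,u_M, v_1,…,v_M be p×q complex matrices with F(z_i)·u_i = v_i for each i. Then the qM×qM block matrix S₂ whose (i,j) block of size q×q is (z_j·u_i* v_j − conj(z_i)·v_i* u_j)/(z_j − conj(z_i)) is Hermitian positive semidefinite. -/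
open Matrix
open scoped ComplexOrder

/-- matrix-valued version of Statement 1: the qM×qM block matrix S₂ whose
(i,j) block is (z_j·u_i* v_j − conj(z_i)·v_i* u_j)/(z_j − conj(z_i)) is positive
semidefinite. -/
theorem stmt4 (N p q M : ℕ) (d : Fin N → ℝ) (hd : ∀ k, 0 ≤ d k)
    (A : Fin N → Matrix (Fin p) (Fin p) ℂ) (hA : ∀ k, (A k).PosSemidef)
    (z : Fin M → ℂ) (hz : Function.Injective z) (him : ∀ i, 0 < (z i).im)
    (u v : Fin M → Matrix (Fin p) (Fin q) ℂ)
    (huv : ∀ i, (∑ k, ((d k : ℂ) - z i)⁻¹ • A k) * u i = v i) :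
    (Matrix.of fun ia jb : Fin M × Fin q =>
      ((z jb.1 • ((u ia.1)ᴴ * v jb.1) - (starRingEnd ℂ) (z ia.1) • ((v ia.1)ᴴ * u jb.1))
          ia.2 jb.2) /
        (z jb.1 - (starRingEnd ℂ) (z ia.1))).PosSemidef := by
  classical
  open scoped MatrixOrder in
  set sq : Fin N → Matrix (Fin p) (Fin p) ℂ := fun k => CFC.sqrt (A k) with hsq
  set W : Fin N → Matrix (Fin p) (Fin M × Fin q) ℂ := fun k =>
    Matrix.of fun a jb => (Real.sqrt (d k) : ℂ) * ((d k : ℂ) - z jb.1)⁻¹ *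
      ((sq k * u jb.1) a jb.2) with hW
  have hne : ∀ (k : Fin N) (i : Fin M), ((d k : ℂ) - z i) ≠ 0 := by
    intro k i h
    have h2 : ((d k : ℂ) - z i).im = 0 := by rw [h]; simp
    rw [Complex.sub_im, Complex.ofReal_im] at h2
    linarith [him i]
  have hne' : ∀ (k : Fin N) (i : Fin M), ((d k : ℂ) - (starRingEnd ℂ) (z i)) ≠ 0 := by
    intro k i h
    have h2 : ((d k : ℂ) - (starRingEnd ℂ) (z i)).im = 0 := by rw [h]; simp
    rw [Complex.sub_im, Complex.ofReal_im, Complex.conj_im] at h2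
    linarith [him i]
  have hden : ∀ i j : Fin M, z j - (starRingEnd ℂ) (z i) ≠ 0 := by
    intro i j h
    have h2 : (z j - (starRingEnd ℂ) (z i)).im = 0 := by rw [h]; simp
    rw [Complex.sub_im, Complex.conj_im] at h2
    linarith [him i, him j]
  have key : (Matrix.of fun ia jb : Fin M × Fin q =>
      ((z jb.1 • ((u ia.1)ᴴ * v jb.1) - (starRingEnd ℂ) (z ia.1) • ((v ia.1)ᴴ * u jb.1))
          ia.2 jb.2) /
        (z jb.1 - (starRingEnd ℂ) (z ia.1))) = ∑ k, (W k)ᴴ * W k := by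
    ext ⟨i, a⟩ ⟨j, b⟩
    rw [Matrix.of_apply, Matrix.sum_apply]
    have hrhs : ∀ k, ((W k)ᴴ * W k) (i, a) (j, b) =
        (d k : ℂ) * (((d k : ℂ) - (starRingEnd ℂ) (z i))⁻¹ * ((d k : ℂ) - z j)⁻¹) *
          ((u i)ᴴ * (A k * u j)) a b := by
      intro k
      have hE : ∑ x : Fin p, (starRingEnd ℂ) ((sq k * u i) x a) * (sq k * u j) x b =
          ((u i)ᴴ * (A k * u j)) a b := by
        have : (u i)ᴴ * (A k * u j) = (sq k * u i)ᴴ * (sq k * u j) := by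
          open scoped MatrixOrder in
          rw [Matrix.conjTranspose_mul, (CFC.sqrt_nonneg (A k)).posSemidef.1, Matrix.mul_assoc,
            ← Matrix.mul_assoc (sq k), CFC.sqrt_mul_sqrt_self (A k) (hA k).nonneg]
        rw [this, Matrix.mul_apply]
        simp [Matrix.conjTranspose_apply]
      rw [Matrix.mul_apply]
      simp only [hW, Matrix.conjTranspose_apply, Matrix.of_apply, Complex.star_def, _root_.map_mul,
        map_inv₀, map_sub, Complex.conj_ofReal]
      rw [← hE, Finset.mul_sum]
      refine Finset.sum_congr rfl fun x _ => ?_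
      have hds : (Real.sqrt (d k) : ℂ) * (Real.sqrt (d k) : ℂ) = (d k : ℂ) := by
        rw [← Complex.ofReal_mul, Real.mul_self_sqrt (hd k)]
      rw [← hds]; ring
    simp only [hrhs]
    have hv : (u i)ᴴ * v j = ∑ k, ((d k : ℂ) - z j)⁻¹ • ((u i)ᴴ * (A k * u j)) := by
      rw [← huv j, Matrix.sum_mul, Matrix.mul_sum]
      simp [Matrix.smul_mul, Matrix.mul_smul, Matrix.mul_assoc]
    have hv' : (v i)ᴴ * u j =
        ∑ k, (starRingEnd ℂ) (((d k : ℂ) - z i)⁻¹) • ((u i)ᴴ * (A k * u j)) := by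
      rw [← huv i, Matrix.conjTranspose_mul, Matrix.conjTranspose_sum, Matrix.mul_sum,
        Matrix.sum_mul]
      refine Finset.sum_congr rfl fun k _ => ?_
      rw [Matrix.conjTranspose_smul, (hA k).1]
      simp [Matrix.smul_mul, Matrix.mul_smul, Matrix.mul_assoc]
    rw [Matrix.sub_apply, Matrix.smul_apply, Matrix.smul_apply, hv, hv', Matrix.sum_apply,
      Matrix.sum_apply, Finset.smul_sum, Finset.smul_sum, ← Finset.sum_sub_distrib,
      Finset.sum_div]
    refine Finset.sum_congr rfl fun k _ => ?_
    rw [Matrix.smul_apply, Matrix.smul_apply, smul_eq_mul, smul_eq_mul, map_inv₀, map_sub,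
      Complex.conj_ofReal]
    have h1 := hne k j
    have h2 := hne' k i
    have h3 := hden i j
    simp only [smul_eq_mul]
    field_simp
    ring
  rw [key]
  exact Finset.sum_induction _ _ (fun a b ha hb => ha.add hb) Matrix.PosSemidef.zero
    (fun k _ => Matrix.posSemidef_conjTranspose_mul_self (W k))
end

section
/- Let z_1,…,z_M be distinct points of the open upper half-plane, let u_1,…,u_M, v_1,…,v_M be p×q complex matrices, and define the qM×qM block matrices S₁ and S₂ whose (i,j) blocks of size q×q are (u_i* v_j − v_i* u_j)/(z_j − conj(z_i)) and (z_j·u_i* v_j − conj(z_i)·v_i* u_j)/(z_j − conj(z_i)) respectively, and the p×qM matrix C₊ = (v_1 ⋯ v_M). Assume S₁ is Hermitian positive definite and S₂ is Hermitian positive semidefinite. Then for each i = 1,…,M, the matrix S₂ − z_i S₁ is invertible and C₊ (S₂ − z_i S₁)⁻¹ C₊* u_i = v_i. -/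
open Matrix
open scoped ComplexOrder

/-- if S₁ is Hermitian positive definite and S₂ is Hermitian positive
semidefinite, then for each i the matrix S₂ − z_i S₁ is invertible and
C₊ (S₂ − z_i S₁)⁻¹ C₊* u_i = v_i. -/
theorem stmt11 (p q M : ℕ) (z : Fin M → ℂ) (hz : Function.Injective z)
    (him : ∀ i, 0 < (z i).im)
    (u v : Fin M → Matrix (Fin p) (Fin q) ℂ)
    (S₁ S₂ : Matrix (Fin M × Fin q) (Fin M × Fin q) ℂ)
    (hS₁ : S₁ = Matrix.of fun ia jb =>
      (((u ia.1)ᴴ * v jb.1 - (v ia.1)ᴴ * u jb.1) ia.2 jb.2) /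
        (z jb.1 - (starRingEnd ℂ) (z ia.1)))
    (hS₂ : S₂ = Matrix.of fun ia jb =>
      ((z jb.1 • ((u ia.1)ᴴ * v jb.1) - (starRingEnd ℂ) (z ia.1) • ((v ia.1)ᴴ * u jb.1))
          ia.2 jb.2) /
        (z jb.1 - (starRingEnd ℂ) (z ia.1)))
    (Cp : Matrix (Fin p) (Fin M × Fin q) ℂ)
    (hCp : Cp = Matrix.of fun a jb => v jb.1 a jb.2)
    (hpd : S₁.PosDef) (hpsd : S₂.PosSemidef) :
    ∀ i, IsUnit (S₂ - z i • S₁) ∧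
      Cp * (S₂ - z i • S₁)⁻¹ * (Cpᴴ * u i) = v i := by
  intro k
  have hden : ∀ i j : Fin M, z j - (starRingEnd ℂ) (z i) ≠ 0 := by
    intro i j h
    have h1 : (z j - (starRingEnd ℂ) (z i)).im = (z j).im + (z i).im := by
      simp [Complex.sub_im, Complex.conj_im]
    rw [h] at h1
    have := him i; have := him j
    simp at h1; linarith
  set A := S₂ - z k • S₁ with hA
  -- invertibility
  have hdet : IsUnit A.det := by
    rw [isUnit_iff_ne_zero]
    intro h0
    obtain ⟨x, hx, hAx⟩ := (Matrix.exists_mulVec_eq_zero_iff).mpr h0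
    have hdot : star x ⬝ᵥ A.mulVec x = 0 := by rw [hAx]; simp
    have hexp : star x ⬝ᵥ S₂.mulVec x - z k * (star x ⬝ᵥ S₁.mulVec x) = 0 := by
      rw [hA, Matrix.sub_mulVec, Matrix.smul_mulVec] at hdot
      simpa [dotProduct_sub, dotProduct_smul, smul_eq_mul] using hdot
    have hb := hpd.dotProduct_mulVec_pos hx
    have ha := hpsd.dotProduct_mulVec_nonneg x
    rw [Complex.lt_def] at hb
    rw [Complex.le_def] at ha
    have him0 : (star x ⬝ᵥ S₂.mulVec x - z k * (star x ⬝ᵥ S₁.mulVec x)).im = 0 := by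
      rw [hexp]; simp
    have hbim : (star x ⬝ᵥ S₁.mulVec x).im = 0 := by simpa using hb.2.symm
    have haim : (star x ⬝ᵥ S₂.mulVec x).im = 0 := by simpa using ha.2.symm
    have hbre : 0 < (star x ⬝ᵥ S₁.mulVec x).re := by simpa using hb.1
    have hk := him k
    rw [Complex.sub_im, Complex.mul_im, hbim, haim] at him0
    nlinarith
  have hAunit : IsUnit A := (Matrix.isUnit_iff_isUnit_det A).mpr hdet
  refine ⟨hAunit, ?_⟩
  set E : Matrix (Fin M × Fin q) (Fin q) ℂ :=
    Matrix.of (fun jb c => if jb = (k, c) then 1 else 0) with hE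
  have h1 : A * E = Cpᴴ * u k := by
    ext ⟨i, a⟩ c
    have hsum : (A * E) (i, a) c = A (i, a) (k, c) := by
      simp [Matrix.mul_apply, hE, mul_ite]
    have hR : (Cpᴴ * u k) (i, a) c = ((v i)ᴴ * u k) a c := by
      simp [hCp, Matrix.mul_apply, Matrix.conjTranspose_apply]
    rw [hsum, hR, hA, hS₁, hS₂]
    simp only [Matrix.of_apply, Matrix.sub_apply, Matrix.smul_apply, smul_eq_mul]
    have hd := hden i k
    field_simp
    ring
  have h2 : Cp * E = v k := by
    ext a c
    simp [Matrix.mul_apply, hE, hCp, mul_ite]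
  calc Cp * A⁻¹ * (Cpᴴ * u k) = Cp * A⁻¹ * (A * E) := by rw [h1]
    _ = Cp * ((A⁻¹ * A) * E) := by rw [Matrix.mul_assoc, Matrix.mul_assoc]
    _ = Cp * E := by rw [Matrix.nonsing_inv_mul A hdet, Matrix.one_mul]
    _ = v k := h2
end
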